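/- Let $p \ge 5$ be a prime and let $b, c, d \in \mathrm{GF}(p)$ with $b^2 - 3c \ne 0$. Suppose the cubic polynomial $f(X) = X^3 + bX^2 + cX + d$ is irreducible over $\mathrm{GF}(p)$, and write $X^p \equiv c_2 X^2 + c_1 X + c_0 \pmod{f(X)}$ for coefficients $c_0, c_1, c_2 \in \mathrm{GF}(p)$. Then $c_2 \ne 0$, and the element $t = (b^2 - 3c) \cdot c_2^{-1}$ satisfies $t^2 = (18bcd - 4b^3 d + b^2 c^2) - (4c^3 + 27d^2)$ in $\mathrm{GF}(p)$. -/

import Mathlib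

open Polynomial

private lemma gfp3_aux (p : ℕ) (hp : p.Prime) (hp5 : 5 ≤ p)
    (b c d : ZMod p) (hbc : b ^ 2 - 3 * c ≠ 0)
    (f : (ZMod p)[X]) (hf : f = X ^ 3 + C b * X ^ 2 + C c * X + C d)
    (hirr : Irreducible f)
    (c₀ c₁ c₂ : ZMod p)
    (hrem : (X : (ZMod p)[X]) ^ p %ₘ f = C c₂ * X ^ 2 + C c₁ * X + C c₀)
    (K : Type) [Field K] [Fintype K] [Algebra (ZMod p) K]
    (hcard : Fintype.card K = p ^ 3)
    (α : K) (hroot : aeval α f = 0)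
    (hmin : minpoly (ZMod p) α = f) :
    c₂ ≠ 0 ∧ ((b ^ 2 - 3 * c) * c₂⁻¹) ^ 2
      = (18 * b * c * d - 4 * b ^ 3 * d + b ^ 2 * c ^ 2) - (4 * c ^ 3 + 27 * d ^ 2) := by
  haveI : Fact p.Prime := ⟨hp⟩
  set φ : ZMod p →+* K := algebraMap (ZMod p) K with hφ
  have hinj : Function.Injective φ := φ.injective
  haveI : CharP K p := charP_of_injective_algebraMap hinj p
  have hmon : f.Monic := by rw [hf]; monicity!
  have hdeg3 : f.natDegree = 3 := by rw [hf]; compute_degree!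
  have hf0 : f ≠ 0 := hmon.ne_zero
  have hβK : α ^ p = φ c₂ * α ^ 2 + φ c₁ * α + φ c₀ := by
    have h := Polynomial.modByMonic_add_div ((X : (ZMod p)[X]) ^ p) f
    have h2 := congrArg (aeval α) h
    rw [hrem] at h2
    simpa [hroot] using h2.symm
  have hfrφ : ∀ x : ZMod p, (φ x) ^ p = φ x := fun x => by
    rw [← map_pow, ZMod.pow_card]
  have hfr : ∀ x y : K, x = φ c₂ * y ^ 2 + φ c₁ * y + φ c₀ →
      x ^ p = φ c₂ * (y ^ p) ^ 2 + φ c₁ * y ^ p + φ c₀ := by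
    intro x y hxy
    rw [hxy, add_pow_char, add_pow_char, mul_pow, mul_pow, ← pow_mul y,
      mul_comm 2 p, pow_mul, hfrφ, hfrφ, hfrφ]
  set β := α ^ p with hβdef
  set γ := β ^ p with hγdef
  have hγK : γ = φ c₂ * β ^ 2 + φ c₁ * β + φ c₀ := hfr β α hβK
  have hγp : γ ^ p = α := by
    have h3 : p * (p * p) = p ^ 3 := by ring
    rw [hγdef, hβdef, ← pow_mul, ← pow_mul, h3, ← hcard]
    exact FiniteField.pow_card α
  have hαK : α = φ c₂ * γ ^ 2 + φ c₁ * γ + φ c₀ := by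
    have h := hfr γ β hγK
    rwa [hγp] at h
  have hfmap : f.map φ = X ^ 3 + C (φ b) * X ^ 2 + C (φ c) * X + C (φ d) := by
    have h := congrArg (Polynomial.map φ) hf
    simpa using h
  have hFα : α ^ 3 + φ b * α ^ 2 + φ c * α + φ d = 0 := by
    have h := (congrArg (aeval α) hf).symm.trans hroot
    simpa [hφ] using h
  have hfrF : ∀ x : K, x ^ 3 + φ b * x ^ 2 + φ c * x + φ d = 0 →
      (x ^ p) ^ 3 + φ b * (x ^ p) ^ 2 + φ c * x ^ p + φ d = 0 := by
    intro x hx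
    have h2 : (x ^ 3 + φ b * x ^ 2 + φ c * x + φ d) ^ p
        = (x ^ p) ^ 3 + φ b * (x ^ p) ^ 2 + φ c * x ^ p + φ d := by
      rw [add_pow_char, add_pow_char, add_pow_char, mul_pow, mul_pow,
        pow_right_comm x 3 p, pow_right_comm x 2 p, hfrφ, hfrφ, hfrφ]
    rw [← h2, hx, zero_pow hp.ne_zero]
  have hFβ : β ^ 3 + φ b * β ^ 2 + φ c * β + φ d = 0 := hfrF α hFα
  have hFγ : γ ^ 3 + φ b * γ ^ 2 + φ c * γ + φ d = 0 := hfrF β hFβ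
  -- α ≠ β
  have hαβ : α ≠ β := by
    intro h
    have hdvd : f ∣ (X ^ p - X : (ZMod p)[X]) := by
      rw [← hmin]
      apply minpoly.dvd
      simp only [map_sub, map_pow, aeval_X]
      rw [← hβdef, ← h, sub_self]
    have hXpX0 : (X ^ p - X : (ZMod p)[X]) ≠ 0 :=
      FiniteField.X_pow_card_sub_X_ne_zero _ hp.one_lt
    have hsp : Splits (X ^ p - X : (ZMod p)[X]) := by
      rw [splits_iff_card_roots]
      have hroots := FiniteField.roots_X_pow_card_sub_X (ZMod p)
      rw [ZMod.card] at hroots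
      rw [hroots, FiniteField.X_pow_card_sub_X_natDegree_eq _ hp.one_lt]
      simpa using (ZMod.card p)
    have hspf : Splits f :=
      hsp.of_dvd hXpX0 hdvd
    obtain ⟨a, ha⟩ := hspf.exists_eval_eq_zero (by
      rw [degree_eq_natDegree hf0, hdeg3]; exact by norm_num)
    have hlin : (X - C a) ∣ f := dvd_iff_isRoot.2 (by simpa using ha)
    obtain ⟨g, hg⟩ := hlin
    rcases hirr.isUnit_or_isUnit hg with hu | hu
    · exact Polynomial.not_isUnit_X_sub_C a hu
    · have : f.natDegree = 1 := by
        rw [hg, natDegree_mul (X_sub_C_ne_zero a) (fun h0 => by simp [h0] at hu),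
          natDegree_X_sub_C, natDegree_eq_zero_of_isUnit hu]
      omega
  have hβγ : β ≠ γ := fun h => hαβ (frobenius_inj K p (by
    rw [frobenius_def, frobenius_def, ← hβdef, ← hγdef]; exact h))
  have hγα : γ ≠ α := fun h => hαβ (by
    have h2 := congrArg (· ^ p) h
    rw [hγp] at h2
    exact h2.trans hβdef.symm)
  -- factor f over K
  have hdvd1 : (X - C α) ∣ f.map φ := dvd_iff_isRoot.2 (by
    rw [IsRoot, eval_map, ← aeval_def, hroot])
  have hdvd2 : (X - C β) ∣ f.map φ := dvd_iff_isRoot.2 (by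
    rw [IsRoot, hfmap]; simpa using hFβ)
  have hdvd3 : (X - C γ) ∣ f.map φ := dvd_iff_isRoot.2 (by
    rw [IsRoot, hfmap]; simpa using hFγ)
  have cop : ∀ x y : K, x ≠ y → IsCoprime (X - C x) (X - C y) := fun x y h =>
    isCoprime_X_sub_C_of_isUnit_sub (sub_ne_zero.2 h).isUnit
  have hdall : (X - C α) * ((X - C β) * (X - C γ)) ∣ f.map φ :=
    ((cop α β hαβ).mul_right (cop α γ (Ne.symm hγα))).mul_dvd hdvd1
      ((cop β γ hβγ).mul_dvd hdvd2 hdvd3)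
  have hprodmon : ((X - C α) * ((X - C β) * (X - C γ))).Monic :=
    (monic_X_sub_C α).mul ((monic_X_sub_C β).mul (monic_X_sub_C γ))
  have hfac : f.map φ = (X - C α) * ((X - C β) * (X - C γ)) := by
    apply Polynomial.eq_of_monic_of_dvd_of_natDegree_le hprodmon (hmon.map φ) hdall
    rw [hmon.natDegree_map, hdeg3,
      (monic_X_sub_C α).natDegree_mul ((monic_X_sub_C β).mul (monic_X_sub_C γ)),
      (monic_X_sub_C β).natDegree_mul (monic_X_sub_C γ)]
    simp [natDegree_X_sub_C]
  -- Vieta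
  have hexp : (X : K[X]) ^ 3 + C (φ b) * X ^ 2 + C (φ c) * X + C (φ d)
      = X ^ 3 - C (α + β + γ) * X ^ 2 + C (α * β + α * γ + β * γ) * X - C (α * β * γ) := by
    rw [← hfmap, hfac]
    simp only [C_add, C_mul]
    ring
  have hb' : φ b = -(α + β + γ) := by
    have h := congrArg (fun q : K[X] => q.coeff 2) hexp
    simp only [coeff_add, coeff_sub, coeff_C_mul, coeff_X_pow, coeff_C, coeff_X] at h
    norm_num at h
    linear_combination h
  have hc' : φ c = α * β + α * γ + β * γ := by
    have h := congrArg (fun q : K[X] => q.coeff 1) hexp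
    simp only [coeff_add, coeff_sub, coeff_C_mul, coeff_X_pow, coeff_C, coeff_X] at h
    norm_num at h
    linear_combination h
  have hd' : φ d = -(α * β * γ) := by
    have h := congrArg (fun q : K[X] => q.coeff 0) hexp
    simp only [coeff_add, coeff_sub, coeff_C_mul, coeff_X_pow, coeff_C, coeff_X] at h
    norm_num at h
    linear_combination h
  -- key identity
  have hkey : φ c₂ * ((α - β) * (β - γ) * (γ - α)) = -(φ b ^ 2 - 3 * φ c) := by
    rw [hb', hc']
    linear_combination (β - γ) * hβK - (α - γ) * hγK + (α - β) * hαK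
  have hc₂ : c₂ ≠ 0 := by
    intro h0
    apply hbc
    apply hinj
    have : φ (b ^ 2 - 3 * c) = φ b ^ 2 - 3 * φ c := by
      simp only [map_sub, map_pow, map_mul, map_ofNat]
    rw [this, map_zero, ← neg_eq_zero, ← hkey, h0, map_zero, zero_mul]
  refine ⟨hc₂, hinj ?_⟩
  have hφc₂ : φ c₂ ≠ 0 := fun h => hc₂ (hinj (by rw [h, map_zero]))
  have hδ : (φ b ^ 2 - 3 * φ c) * (φ c₂)⁻¹ = -((α - β) * (β - γ) * (γ - α)) := by
    have h5 : φ b ^ 2 - 3 * φ c = -((α - β) * (β - γ) * (γ - α)) * φ c₂ := by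
      linear_combination hkey
    rw [h5, mul_inv_cancel_right₀ hφc₂]
  have hLHS : φ (((b ^ 2 - 3 * c) * c₂⁻¹) ^ 2)
      = ((φ b ^ 2 - 3 * φ c) * (φ c₂)⁻¹) ^ 2 := by
    simp only [map_pow, map_mul, map_sub, map_inv₀, map_ofNat]
  rw [hLHS, hδ]
  have hRHS : φ ((18 * b * c * d - 4 * b ^ 3 * d + b ^ 2 * c ^ 2) - (4 * c ^ 3 + 27 * d ^ 2))
      = (18 * φ b * φ c * φ d - 4 * φ b ^ 3 * φ d + φ b ^ 2 * φ c ^ 2)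
        - (4 * φ c ^ 3 + 27 * φ d ^ 2) := by
    simp only [map_sub, map_add, map_mul, map_pow, map_ofNat]
  rw [hRHS, hb', hc', hd']
  ring

/-- **Theorem 3.** If `x³ + b x² + c x + d` is irreducible over `GF(p)` (with `p ≥ 5` prime,
`b² - 3c ≠ 0`), and `X^p ≡ c₂ X² + c₁ X + c₀ (mod f)`, then `c₂ ≠ 0` and
`t = (b² - 3c) · c₂⁻¹` satisfies `t² = (18bcd - 4b³d + b²c²) - (4c³ + 27d²)`. -/
theorem gfp3_sqrt_general_cubic (p : ℕ) (hp : p.Prime) (hp5 : 5 ≤ p)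
    (b c d : ZMod p) (hbc : b ^ 2 - 3 * c ≠ 0)
    (f : (ZMod p)[X]) (hf : f = X ^ 3 + C b * X ^ 2 + C c * X + C d)
    (hirr : Irreducible f)
    (c₀ c₁ c₂ : ZMod p)
    (hrem : (X : (ZMod p)[X]) ^ p %ₘ f = C c₂ * X ^ 2 + C c₁ * X + C c₀) :
    c₂ ≠ 0 ∧ ((b ^ 2 - 3 * c) * c₂⁻¹) ^ 2
      = (18 * b * c * d - 4 * b ^ 3 * d + b ^ 2 * c ^ 2) - (4 * c ^ 3 + 27 * d ^ 2) := by
  haveI : Fact p.Prime := ⟨hp⟩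
  haveI : Fact (Irreducible f) := ⟨hirr⟩
  have hmon : f.Monic := by rw [hf]; monicity!
  have hdeg3 : f.natDegree = 3 := by rw [hf]; compute_degree!
  have hf0 : f ≠ 0 := hmon.ne_zero
  haveI : Fintype (AdjoinRoot f) := Module.fintypeOfFintype (AdjoinRoot.powerBasis' hmon).basis
  have hcard : Fintype.card (AdjoinRoot f) = p ^ 3 := by
    rw [Module.card_eq_pow_finrank (K := ZMod p) (V := AdjoinRoot f), ZMod.card,
      (AdjoinRoot.powerBasis' hmon).finrank]
    simp [AdjoinRoot.powerBasis', hdeg3]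
  have hroot : aeval (AdjoinRoot.root f) f = 0 := by
    rw [aeval_def, AdjoinRoot.algebraMap_eq]; exact AdjoinRoot.eval₂_root f
  have hmin : minpoly (ZMod p) (AdjoinRoot.root f) = f := by
    rw [AdjoinRoot.minpoly_root hf0, hmon.leadingCoeff, inv_one, map_one, mul_one]
  exact gfp3_aux p hp hp5 b c d hbc f hf hirr c₀ c₁ c₂ hrem (AdjoinRoot f) hcard
    (AdjoinRoot.root f) hroot hmin
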